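/- (Beznosova's Little Lemma.) Let w be a weight on ℝ such that w^{-1} is also a weight (i.e., both w and w^{-1} are locally integrable and positive a.e.). Let {λ_I}_{I∈D} be a Carleson sequence with intensity A, i.e., ∑_{I∈D(J)} λ_I ≤ A|J| for all J ∈ D. Then for every J ∈ D, ∑_{I∈D(J)} λ_I / ⟨w^{-1}⟩_I ≤ 4A · w(J); that is, {λ_I/⟨w^{-1}⟩_I}_{I∈D} is a w-Carleson sequence with intensity 4A. -/

import Mathlib

open MeasureTheory ENNReal

noncomputable section

/-- Average of `f` over a set `I ⊆ ℝ` with respect to Lebesgue measure. -/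
def iAvg (I : Set ℝ) (f : ℝ → ℝ) : ℝ :=
  (volume I).toReal⁻¹ * ∫ x in I, f x

/-- A weight on `ℝ`: locally integrable and a.e. positive. -/
def IsWeight1 (w : ℝ → ℝ) : Prop :=
  MeasureTheory.LocallyIntegrable w volume ∧ ∀ᵐ x : ℝ, 0 < w x

/-- The standard dyadic interval `[k 2^{-j}, (k+1) 2^{-j})`. -/
def dyadInt (j k : ℤ) : Set ℝ :=
  Set.Ico ((k : ℝ) * (2:ℝ) ^ (-j)) (((k : ℝ) + 1) * (2:ℝ) ^ (-j))

namespace BLL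

/-! ### Dyadic geometry -/

lemma tzp (j : ℤ) : (0:ℝ) < (2:ℝ) ^ j := zpow_pos (by norm_num) j

lemma dyad_lt (j k : ℤ) : (k : ℝ) * (2:ℝ) ^ (-j) < ((k:ℝ)+1) * (2:ℝ) ^ (-j) := by
  have := tzp (-j); nlinarith

lemma dyad_nonempty (j k : ℤ) : (dyadInt j k).Nonempty :=
  Set.nonempty_Ico.2 (dyad_lt j k)

lemma volume_dyad (j k : ℤ) : volume (dyadInt j k) = ENNReal.ofReal ((2:ℝ) ^ (-j)) := by
  rw [dyadInt, Real.volume_Ico]; ring_nf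

lemma volume_dyad_toReal (j k : ℤ) : (volume (dyadInt j k)).toReal = (2:ℝ) ^ (-j) := by
  rw [volume_dyad, ENNReal.toReal_ofReal (tzp (-j)).le]

lemma meas_dyad (j k : ℤ) : MeasurableSet (dyadInt j k) := measurableSet_Ico

lemma half (j : ℤ) : (2:ℝ) ^ (-j) = 2 * (2:ℝ) ^ (-(j+1)) := by
  rw [show -j = 1 + -(j+1) by ring, zpow_add₀ (by norm_num : (2:ℝ) ≠ 0)]; norm_num

lemma dyad_union (j k : ℤ) :
    dyadInt (j+1) (2*k) ∪ dyadInt (j+1) (2*k+1) = dyadInt j k := by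
  unfold dyadInt
  have h := tzp (-(j+1))
  rw [show ((2*k : ℤ) : ℝ) = 2*(k:ℝ) by push_cast; ring,
      show ((2*k+1 : ℤ) : ℝ) = 2*(k:ℝ)+1 by push_cast; ring]
  rw [Set.Ico_union_Ico_eq_Ico (by nlinarith) (by nlinarith)]
  rw [half j]; ring_nf

lemma dyad_disj (j k : ℤ) :
    Disjoint (dyadInt (j+1) (2*k)) (dyadInt (j+1) (2*k+1)) := by
  unfold dyadInt
  rw [show ((2*k : ℤ) : ℝ) + 1 = ((2*k+1 : ℤ) : ℝ) by push_cast; ring]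
  exact Set.Ico_disjoint_Ico_same

lemma childL_sub (j k : ℤ) : dyadInt (j+1) (2*k) ⊆ dyadInt j k := by
  rw [← dyad_union j k]; exact Set.subset_union_left

lemma childR_sub (j k : ℤ) : dyadInt (j+1) (2*k+1) ⊆ dyadInt j k := by
  rw [← dyad_union j k]; exact Set.subset_union_right

lemma dyad_subset_iff {a b j k : ℤ} :
    dyadInt a b ⊆ dyadInt j k ↔
      ((k:ℝ) * (2:ℝ)^(-j) ≤ (b:ℝ) * (2:ℝ)^(-a) ∧
        ((b:ℝ)+1) * (2:ℝ)^(-a) ≤ ((k:ℝ)+1) * (2:ℝ)^(-j)) :=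
  Set.Ico_subset_Ico_iff (dyad_lt a b)

lemma dyad_level {a b j k : ℤ} (h : dyadInt a b ⊆ dyadInt j k) : j ≤ a := by
  obtain ⟨h1, h2⟩ := dyad_subset_iff.1 h
  have h3 : (2:ℝ)^(-a) ≤ (2:ℝ)^(-j) := by nlinarith
  have : (-a : ℤ) ≤ -j := by
    by_contra hc
    push_neg at hc
    have := zpow_lt_zpow_right₀ (by norm_num : (1:ℝ) < 2) hc
    linarith
  omega

lemma dyad_trichotomy {a b j k : ℤ} (h : dyadInt a b ⊆ dyadInt j k) :
    (a = j ∧ b = k) ∨ dyadInt a b ⊆ dyadInt (j+1) (2*k) ∨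
      dyadInt a b ⊆ dyadInt (j+1) (2*k+1) := by
  obtain ⟨h1, h2⟩ := dyad_subset_iff.1 h
  have hja := dyad_level h
  have hpa := tzp (-a)
  rcases eq_or_lt_of_le hja with heq | hlt
  · left
    subst heq
    constructor
    · rfl
    · have hk1 : (k:ℝ) ≤ (b:ℝ) := by nlinarith
      have hk2 : (b:ℝ) ≤ (k:ℝ) := by nlinarith
      have : (k:ℝ) = (b:ℝ) := le_antisymm hk1 hk2
      exact_mod_cast this.symm
  · right
    have hj1a : j + 1 ≤ a := hlt
    set e : ℕ := (a - (j+1)).toNat with he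
    have hecast : (e : ℤ) = a - (j+1) := Int.toNat_of_nonneg (by omega)
    set M : ℤ := (2*k+1) * 2^e with hM
    have hMcast : (M : ℝ) * (2:ℝ)^(-a) = (2*(k:ℝ)+1) * (2:ℝ)^(-(j+1)) := by
      rw [hM]
      push_cast
      rw [mul_assoc]
      congr 1
      rw [← zpow_natCast (2:ℝ) e, ← zpow_add₀ (by norm_num : (2:ℝ) ≠ 0)]
      congr 1
      omega
    have hL : ((2*k : ℤ):ℝ) * (2:ℝ)^(-(j+1)) = (k:ℝ) * (2:ℝ)^(-j) := by
      push_cast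
      rw [show (-j) = 1 + -(j+1) by ring, zpow_add₀ (by norm_num : (2:ℝ) ≠ 0)]
      ring
    have hR : (((2*k+1 : ℤ):ℝ)+1) * (2:ℝ)^(-(j+1)) = ((k:ℝ)+1) * (2:ℝ)^(-j) := by
      push_cast
      rw [show (-j) = 1 + -(j+1) by ring, zpow_add₀ (by norm_num : (2:ℝ) ≠ 0)]
      ring
    rcases le_or_gt M b with hMb | hbM
    · right
      rw [dyad_subset_iff]
      constructor
      · rw [show ((2*k+1 : ℤ):ℝ) = 2*(k:ℝ)+1 by push_cast; ring, ← hMcast]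
        have : (M:ℝ) ≤ (b:ℝ) := by exact_mod_cast hMb
        nlinarith
      · rw [hR]; exact h2
    · left
      rw [dyad_subset_iff]
      constructor
      · rw [hL]; exact h1
      · rw [show ((2*k : ℤ):ℝ)+1 = 2*(k:ℝ)+1 by push_cast; ring, ← hMcast]
        have : (b:ℝ)+1 ≤ (M:ℝ) := by exact_mod_cast hbM
        nlinarith

lemma not_sub_both {a b j k : ℤ} (h1 : dyadInt a b ⊆ dyadInt (j+1) (2*k))
    (h2 : dyadInt a b ⊆ dyadInt (j+1) (2*k+1)) : False := by
  have := Set.disjoint_left.1 (dyad_disj j k)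
  obtain ⟨x, hx⟩ := dyad_nonempty a b
  exact this (h1 hx) (h2 hx)

lemma parent_ne_childL {j k : ℤ} : ¬ (dyadInt j k ⊆ dyadInt (j+1) (2*k)) := fun h => by
  have := dyad_level h; omega

lemma parent_ne_childR {j k : ℤ} : ¬ (dyadInt j k ⊆ dyadInt (j+1) (2*k+1)) := fun h => by
  have := dyad_level h; omega

/-! ### Analytic facts -/

variable {f : ℝ → ℝ}

lemma intOn (hf : LocallyIntegrable f volume) (j k : ℤ) :
    IntegrableOn f (dyadInt j k) volume :=
  (hf.integrableOn_isCompact isCompact_Icc).mono_set Set.Ico_subset_Icc_self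

lemma setInt_pos (hf : LocallyIntegrable f volume) (hfp : ∀ᵐ x, 0 < f x) (j k : ℤ) :
    0 < ∫ x in dyadInt j k, f x := by
  rw [setIntegral_pos_iff_support_of_nonneg_ae
      (ae_restrict_of_ae (hfp.mono fun x hx => hx.le)) (intOn hf j k)]
  have hnull : volume {x : ℝ | ¬ 0 < f x} = 0 := by
    have := hfp
    rwa [MeasureTheory.ae_iff] at this
  have hsub : dyadInt j k ⊆ (Function.support f ∩ dyadInt j k) ∪ {x : ℝ | ¬ 0 < f x} := by
    intro x hx
    by_cases hfx : 0 < f x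
    · exact Or.inl ⟨fun h0 => by simp [h0] at hfx, hx⟩
    · exact Or.inr hfx
  have := measure_mono (μ := volume) hsub
  rw [volume_dyad] at this
  have hle := (measure_union_le (μ := volume) (Function.support f ∩ dyadInt j k) {x : ℝ | ¬ 0 < f x})
  rw [hnull, add_zero] at hle
  have hpos : (0:ℝ≥0∞) < ENNReal.ofReal ((2:ℝ)^(-j)) := by
    simp [ENNReal.ofReal_pos, tzp]
  calc (0:ℝ≥0∞) < ENNReal.ofReal ((2:ℝ)^(-j)) := hpos
    _ ≤ _ := le_trans this hle

lemma avg_pos (hf : LocallyIntegrable f volume) (hfp : ∀ᵐ x, 0 < f x) (j k : ℤ) :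
    0 < iAvg (dyadInt j k) f := by
  unfold iAvg
  rw [volume_dyad_toReal]
  exact mul_pos (inv_pos.2 (tzp (-j))) (setInt_pos hf hfp j k)

lemma integral_split (hf : LocallyIntegrable f volume) (j k : ℤ) :
    ∫ x in dyadInt j k, f x
      = (∫ x in dyadInt (j+1) (2*k), f x) + ∫ x in dyadInt (j+1) (2*k+1), f x := by
  rw [← dyad_union j k,
    setIntegral_union (dyad_disj j k) (meas_dyad _ _) (intOn hf _ _) (intOn hf _ _)]

lemma avg_eq (j k : ℤ) : iAvg (dyadInt j k) f * (2:ℝ)^(-j) = ∫ x in dyadInt j k, f x := by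
  unfold iAvg
  rw [volume_dyad_toReal]
  field_simp

lemma avg_mid (hf : LocallyIntegrable f volume) (j k : ℤ) :
    iAvg (dyadInt j k) f
      = (iAvg (dyadInt (j+1) (2*k)) f + iAvg (dyadInt (j+1) (2*k+1)) f) / 2 := by
  have h1 := avg_eq (f := f) j k
  have h2 := avg_eq (f := f) (j+1) (2*k)
  have h3 := avg_eq (f := f) (j+1) (2*k+1)
  have h4 := integral_split hf j k
  have h5 := half j
  rw [h5] at h1
  have key : iAvg (dyadInt j k) f * (2 * (2:ℝ)^(-(j+1)))
      = ((iAvg (dyadInt (j+1) (2*k)) f + iAvg (dyadInt (j+1) (2*k+1)) f) / 2)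
          * (2 * (2:ℝ)^(-(j+1))) := by
    rw [h1]
    have hr : ((iAvg (dyadInt (j+1) (2*k)) f + iAvg (dyadInt (j+1) (2*k+1)) f) / 2)
        * (2 * (2:ℝ)^(-(j+1)))
        = iAvg (dyadInt (j+1) (2*k)) f * (2:ℝ)^(-(j+1))
          + iAvg (dyadInt (j+1) (2*k+1)) f * (2:ℝ)^(-(j+1)) := by ring
    rw [hr, h2, h3]
    exact h4
  have hp : (0:ℝ) < 2 * (2:ℝ)^(-(j+1)) := by positivity
  exact mul_right_cancel₀ hp.ne' key

lemma cs (hw : LocallyIntegrable f volume) (hwp : ∀ᵐ x, 0 < f x)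
    (hw' : LocallyIntegrable (fun x => (f x)⁻¹) volume) (j k : ℤ) :
    1 ≤ iAvg (dyadInt j k) f * iAvg (dyadInt j k) (fun x => (f x)⁻¹) := by
  set I := dyadInt j k
  set m : ℝ := (2:ℝ)^(-j) with hm
  have hmp : 0 < m := tzp (-j)
  set X : ℝ := ∫ x in I, f x with hX
  set Y : ℝ := ∫ x in I, (f x)⁻¹ with hY
  have hXp : 0 < X := setInt_pos hw hwp j k
  have hYp : 0 < Y := setInt_pos hw' (hwp.mono fun x hx => inv_pos.2 hx) j k
  have key : ∀ t : ℝ, 0 < t → 2 * m ≤ t * X + t⁻¹ * Y := by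
    intro t ht
    have hint1 : IntegrableOn (fun _ : ℝ => (2:ℝ)) I volume := by
      refine integrableOn_const ?_ (by simp)
      rw [volume_dyad]
      exact ENNReal.ofReal_ne_top
    have hint2 : IntegrableOn (fun x => t * f x + t⁻¹ * (f x)⁻¹) I volume :=
      ((intOn hw j k).const_mul t).add ((intOn hw' j k).const_mul t⁻¹)
    have hae : ∀ᵐ x ∂(volume.restrict I), (fun _ : ℝ => (2:ℝ)) x ≤ t * f x + t⁻¹ * (f x)⁻¹ := by
      refine ae_restrict_of_ae (hwp.mono fun x hx => ?_)
      have h1 : 0 < t * f x := mul_pos ht hx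
      have : t * f x + (t * f x)⁻¹ ≥ 2 := by
        have hd : t * f x + (t * f x)⁻¹ - 2 = (t * f x - 1)^2 / (t * f x) := by
          field_simp; ring
        have : (0:ℝ) ≤ (t * f x - 1)^2 / (t * f x) := by positivity
        linarith [hd ▸ this]
      calc (2:ℝ) ≤ t * f x + (t * f x)⁻¹ := this
        _ = t * f x + t⁻¹ * (f x)⁻¹ := by rw [mul_inv]
    have := integral_mono_ae hint1 hint2 hae
    rw [setIntegral_const] at this
    rw [integral_add ((intOn hw j k).const_mul t) ((intOn hw' j k).const_mul t⁻¹)] at this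
    rw [integral_const_mul, integral_const_mul] at this
    calc 2 * m = (volume I).toReal • (2:ℝ) := by
          rw [volume_dyad_toReal]; simp [hm]; ring
      _ ≤ _ := this
  have h1 := key (m / X) (div_pos hmp hXp)
  have h2 : m * m ≤ X * Y := by
    have e0 : (m/X)⁻¹ = X/m := by field_simp
    rw [e0] at h1
    have e1 : m/X * X = m := by field_simp
    rw [e1] at h1
    have e2 : X/m*Y = X*Y/m := by ring
    rw [e2] at h1
    exact (le_div_iff₀ hmp).1 (by linarith : m ≤ X*Y/m)
  have e2 : iAvg I f = m⁻¹ * X := by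
    unfold iAvg; rw [show I = dyadInt j k from rfl, volume_dyad_toReal]
  have e3 : iAvg I (fun x => (f x)⁻¹) = m⁻¹ * Y := by
    unfold iAvg; rw [show I = dyadInt j k from rfl, volume_dyad_toReal]
  rw [e2, e3]
  rw [show m⁻¹ * X * (m⁻¹ * Y) = (X*Y)/(m*m) by field_simp]
  rw [le_div_iff₀ (by positivity)]
  linarith

/-! ### Bellman function inequality -/

lemma conv_aux {a b x y : ℝ} (ha : 0 < a) (hb : 0 < b) (hx : 0 < x) (hy : 0 < y) :
    1/(((a+b)/2)*((x+y)/2)) ≤ (1/(a*x) + 1/(b*y))/2 := by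
  have hrhs : (1/(a*x) + 1/(b*y))/2 = (b*y + a*x)/(2*((a*x)*(b*y))) := by
    rw [div_add_div _ _ (by positivity : (a*x) ≠ 0) (by positivity : (b*y) ≠ 0), div_div]
    congr 1 <;> ring
  rw [hrhs, div_le_div_iff₀ (by positivity) (by positivity)]
  nlinarith [sq_nonneg (a*x - b*y), mul_nonneg (mul_nonneg ha.le hb.le) (sq_nonneg (x - y)),
    mul_nonneg (mul_nonneg hx.le hy.le) (sq_nonneg (a - b))]

lemma bellman_MI {A v₁ v₂ l₁ l₂ Δ : ℝ} (hA : 0 < A) (hv₁ : 0 < v₁) (hv₂ : 0 < v₂)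
    (hl₁ : 0 ≤ l₁) (hl₂ : 0 ≤ l₂) (hΔ : 0 ≤ Δ) (hsum : Δ + (l₁+l₂)/2 ≤ A) :
    1/(((v₁+v₂)/2)*(1+(Δ+(l₁+l₂)/2)/A)) + Δ/(4*A*((v₁+v₂)/2))
      ≤ (1/(v₁*(1+l₁/A)) + 1/(v₂*(1+l₂/A)))/2 := by
  set v : ℝ := (v₁+v₂)/2 with hv
  have hvp : 0 < v := by positivity
  set s₁ : ℝ := 1 + l₁/A with hs₁
  set s₂ : ℝ := 1 + l₂/A with hs₂
  set s' : ℝ := (s₁+s₂)/2 with hs'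
  set s : ℝ := 1 + (Δ+(l₁+l₂)/2)/A with hs
  have hs₁p : 0 < s₁ := by positivity
  have hs₂p : 0 < s₂ := by positivity
  have hs'p : 0 < s' := by positivity
  have hsp : 0 < s := by positivity
  have hss' : s = s' + Δ/A := by rw [hs, hs', hs₁, hs₂]; ring
  have hs2 : s ≤ 2 := by
    rw [hs]
    have : (Δ+(l₁+l₂)/2)/A ≤ 1 := by
      rw [div_le_one hA]; exact hsum
    linarith
  have hs's : s' ≤ s := by rw [hss']; have := div_nonneg hΔ hA.le; linarith
  have stepA : 1/(v*s') ≤ (1/(v₁*s₁) + 1/(v₂*s₂))/2 := conv_aux hv₁ hv₂ hs₁p hs₂p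
  have stepB : 1/(v*s) + Δ/(4*A*v) ≤ 1/(v*s') := by
    have key : 1/(v*s') - 1/(v*s) = (Δ/A)/(v*s*s') := by
      rw [hss']
      field_simp
      ring
    have hb : (Δ/A)/(v*(4:ℝ)) ≤ (Δ/A)/(v*s*s') := by
      apply div_le_div_of_nonneg_left (by positivity) (by positivity)
      calc v*s*s' ≤ v*2*2 := by
            apply mul_le_mul (mul_le_mul_of_nonneg_left hs2 hvp.le) (le_trans hs's hs2) hs'p.le
              (by positivity)
        _ = v*4 := by ring
    have he : (Δ/A)/(v*(4:ℝ)) = Δ/(4*A*v) := by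
      rw [div_div]
      congr 1
      ring
    rw [he] at hb
    linarith [hb, key]
  linarith

/-! ### The recursions -/

variable (w : ℝ → ℝ) (lam : ℤ × ℤ → ℝ)

/-- partial sums of `λ_I / ⟨w⁻¹⟩_I` over the dyadic subtree, up to depth `n`. -/
def Sfun : ℕ → ℤ × ℤ → ℝ
  | 0, _ => 0
  | n+1, p => lam p / iAvg (dyadInt p.1 p.2) (fun x => (w x)⁻¹)
      + Sfun n (p.1+1, 2*p.2) + Sfun n (p.1+1, 2*p.2+1)

/-- partial sums of `λ_I` over the dyadic subtree, up to depth `n`. -/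
def Lfun : ℕ → ℤ × ℤ → ℝ
  | 0, _ => 0
  | n+1, p => lam p + Lfun n (p.1+1, 2*p.2) + Lfun n (p.1+1, 2*p.2+1)

variable {w lam}

lemma Lfun_nonneg (hlam : ∀ p, 0 ≤ lam p) : ∀ n p, 0 ≤ Lfun lam n p := by
  intro n
  induction n with
  | zero => intro p; simp [Lfun]
  | succ n ih =>
    intro p
    have := hlam p
    have h1 := ih (p.1+1, 2*p.2)
    have h2 := ih (p.1+1, 2*p.2+1)
    simp only [Lfun]
    linarith

/-! ### Comparison with the Carleson sum -/

lemma tsum_split (g : ℤ × ℤ → ℝ≥0∞) (j k : ℤ) :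
    g (j,k) + (∑' q : {p : ℤ × ℤ // dyadInt p.1 p.2 ⊆ dyadInt (j+1) (2*k)}, g q.1)
      + ∑' q : {p : ℤ × ℤ // dyadInt p.1 p.2 ⊆ dyadInt (j+1) (2*k+1)}, g q.1
    ≤ ∑' q : {p : ℤ × ℤ // dyadInt p.1 p.2 ⊆ dyadInt j k}, g q.1 := by
  classical
  have e0 : g (j,k) = ∑' x : ({((j,k) : ℤ × ℤ)} : Set (ℤ × ℤ)), g x := (tsum_singleton _ g).symm
  have e1 : (∑' q : {p : ℤ × ℤ // dyadInt p.1 p.2 ⊆ dyadInt (j+1) (2*k)}, g q.1)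
      = ∑' x, ({p : ℤ × ℤ | dyadInt p.1 p.2 ⊆ dyadInt (j+1) (2*k)}).indicator g x :=
    tsum_subtype _ g
  have e2 : (∑' q : {p : ℤ × ℤ // dyadInt p.1 p.2 ⊆ dyadInt (j+1) (2*k+1)}, g q.1)
      = ∑' x, ({p : ℤ × ℤ | dyadInt p.1 p.2 ⊆ dyadInt (j+1) (2*k+1)}).indicator g x :=
    tsum_subtype _ g
  have e3 : (∑' q : {p : ℤ × ℤ // dyadInt p.1 p.2 ⊆ dyadInt j k}, g q.1)
      = ∑' x, ({p : ℤ × ℤ | dyadInt p.1 p.2 ⊆ dyadInt j k}).indicator g x :=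
    tsum_subtype _ g
  have e0' : g (j,k) = ∑' x, (({((j,k) : ℤ × ℤ)} : Set (ℤ × ℤ))).indicator g x := by
    rw [e0, tsum_subtype _ g]
  rw [e0', e1, e2, e3, ← ENNReal.tsum_add, ← ENNReal.tsum_add]
  apply ENNReal.tsum_le_tsum
  intro p
  set T0 : Set (ℤ × ℤ) := {((j,k) : ℤ × ℤ)} with hT0
  set T1 : Set (ℤ × ℤ) := {p : ℤ × ℤ | dyadInt p.1 p.2 ⊆ dyadInt (j+1) (2*k)} with hT1
  set T2 : Set (ℤ × ℤ) := {p : ℤ × ℤ | dyadInt p.1 p.2 ⊆ dyadInt (j+1) (2*k+1)} with hT2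
  set T : Set (ℤ × ℤ) := {p : ℤ × ℤ | dyadInt p.1 p.2 ⊆ dyadInt j k} with hT
  by_cases hmain : dyadInt p.1 p.2 ⊆ dyadInt j k
  · have hR : T.indicator g p = g p := Set.indicator_of_mem (show p ∈ T from hmain) g
    rw [hR]
    by_cases h1 : dyadInt p.1 p.2 ⊆ dyadInt (j+1) (2*k)
    · have h2 : ¬ dyadInt p.1 p.2 ⊆ dyadInt (j+1) (2*k+1) := fun h => not_sub_both h1 h
      have h0 : p ∉ T0 := by
        intro hp
        rw [hT0, Set.mem_singleton_iff] at hp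
        subst hp
        exact parent_ne_childL h1
      rw [Set.indicator_of_notMem h0, Set.indicator_of_mem (show p ∈ T1 from h1),
        Set.indicator_of_notMem (show p ∉ T2 from h2)]
      simp
    · by_cases h2 : dyadInt p.1 p.2 ⊆ dyadInt (j+1) (2*k+1)
      · have h0 : p ∉ T0 := by
          intro hp
          rw [hT0, Set.mem_singleton_iff] at hp
          subst hp
          exact parent_ne_childR h2
        rw [Set.indicator_of_notMem h0, Set.indicator_of_notMem (show p ∉ T1 from h1),
          Set.indicator_of_mem (show p ∈ T2 from h2)]
        simp
      · rw [Set.indicator_of_notMem (show p ∉ T1 from h1),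
          Set.indicator_of_notMem (show p ∉ T2 from h2)]
        by_cases h0 : p ∈ T0
        · rw [Set.indicator_of_mem h0]; simp
        · rw [Set.indicator_of_notMem h0]; simp
  · have h1 : ¬ dyadInt p.1 p.2 ⊆ dyadInt (j+1) (2*k) :=
      fun h => hmain (h.trans (childL_sub j k))
    have h2 : ¬ dyadInt p.1 p.2 ⊆ dyadInt (j+1) (2*k+1) :=
      fun h => hmain (h.trans (childR_sub j k))
    have h0 : p ∉ T0 := by
      intro hp
      rw [hT0, Set.mem_singleton_iff] at hp
      subst hp
      exact hmain (subset_refl _)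
    rw [Set.indicator_of_notMem h0, Set.indicator_of_notMem (show p ∉ T1 from h1),
      Set.indicator_of_notMem (show p ∉ T2 from h2),
      Set.indicator_of_notMem (show p ∉ T from hmain)]
    simp

lemma Lfun_ofReal_le (hlam : ∀ p, 0 ≤ lam p) :
    ∀ n j k, ENNReal.ofReal (Lfun lam n (j,k))
      ≤ ∑' q : {p : ℤ × ℤ // dyadInt p.1 p.2 ⊆ dyadInt j k}, ENNReal.ofReal (lam q.1) := by
  intro n
  induction n with
  | zero => intro j k; simp [Lfun]
  | succ n ih =>
    intro j k
    have hrec : Lfun lam (n+1) (j,k)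
        = lam (j,k) + Lfun lam n (j+1, 2*k) + Lfun lam n (j+1, 2*k+1) := rfl
    rw [hrec, ENNReal.ofReal_add (add_nonneg (hlam (j,k)) (Lfun_nonneg hlam n (j+1, 2*k)))
        (Lfun_nonneg hlam n (j+1, 2*k+1)),
      ENNReal.ofReal_add (hlam (j,k)) (Lfun_nonneg hlam n (j+1, 2*k))]
    calc ENNReal.ofReal (lam (j,k)) + ENNReal.ofReal (Lfun lam n (j+1, 2*k))
          + ENNReal.ofReal (Lfun lam n (j+1, 2*k+1))
        ≤ ENNReal.ofReal (lam (j,k))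
          + (∑' q : {p : ℤ × ℤ // dyadInt p.1 p.2 ⊆ dyadInt (j+1) (2*k)},
              ENNReal.ofReal (lam q.1))
          + ∑' q : {p : ℤ × ℤ // dyadInt p.1 p.2 ⊆ dyadInt (j+1) (2*k+1)},
              ENNReal.ofReal (lam q.1) := by
          gcongr
          · exact ih (j+1) (2*k)
          · exact ih (j+1) (2*k+1)
      _ ≤ _ := tsum_split (fun p => ENNReal.ofReal (lam p)) j k

lemma Lfun_le {A : ℝ} (hlam : ∀ p, 0 ≤ lam p) (hA : 0 < A)
    (hCarleson : ∀ j k : ℤ,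
      ∑' q : {p : ℤ × ℤ // dyadInt p.1 p.2 ⊆ dyadInt j k}, ENNReal.ofReal (lam q.1)
        ≤ ENNReal.ofReal (A * (volume (dyadInt j k)).toReal))
    (n : ℕ) (j k : ℤ) : Lfun lam n (j,k) ≤ A * (2:ℝ)^(-j) := by
  have h := (Lfun_ofReal_le hlam n j k).trans (hCarleson j k)
  rw [volume_dyad_toReal] at h
  exact (ENNReal.ofReal_le_ofReal_iff (by positivity)).1 h

/-! ### The Bellman induction -/

lemma bell {A : ℝ} (hw1 : LocallyIntegrable w volume) (hw2 : ∀ᵐ x : ℝ, 0 < w x)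
    (hw1' : LocallyIntegrable (fun x => (w x)⁻¹) volume)
    (hlam : ∀ p, 0 ≤ lam p) (hA : 0 < A)
    (hCarleson : ∀ j k : ℤ,
      ∑' q : {p : ℤ × ℤ // dyadInt p.1 p.2 ⊆ dyadInt j k}, ENNReal.ofReal (lam q.1)
        ≤ ENNReal.ofReal (A * (volume (dyadInt j k)).toReal)) :
    ∀ n (j k : ℤ), Sfun w lam n (j,k) ≤ 4*A*(2:ℝ)^(-j) *
      (iAvg (dyadInt j k) w
        - 1/(iAvg (dyadInt j k) (fun x => (w x)⁻¹)
              * (1 + (Lfun lam n (j,k)/(2:ℝ)^(-j))/A))) := by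
  have hw2' : ∀ᵐ x : ℝ, 0 < (w x)⁻¹ := hw2.mono fun x hx => inv_pos.2 hx
  intro n
  induction n with
  | zero =>
    intro j k
    have hv := avg_pos hw1' hw2' j k
    have hcs := cs hw1 hw2 hw1' j k
    have hS : Sfun w lam 0 (j,k) = 0 := rfl
    have hL : Lfun lam 0 (j,k) = 0 := rfl
    rw [hS, hL]
    have h1 : ((0:ℝ)/(2:ℝ)^(-j))/A = 0 := by simp
    rw [h1, add_zero, mul_one]
    have h2 : 1/(iAvg (dyadInt j k) (fun x => (w x)⁻¹)) ≤ iAvg (dyadInt j k) w := by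
      rw [div_le_iff₀ hv]
      linarith
    have := tzp (-j)
    have h3 : 0 ≤ iAvg (dyadInt j k) w - 1/(iAvg (dyadInt j k) (fun x => (w x)⁻¹)) := by
      linarith
    positivity
  | succ n ih =>
    intro j k
    have hm : (0:ℝ) < (2:ℝ)^(-(j+1)) := tzp _
    have hmj : (2:ℝ)^(-j) = 2 * (2:ℝ)^(-(j+1)) := half j
    have hv1 := avg_pos hw1' hw2' (j+1) (2*k)
    have hv2 := avg_pos hw1' hw2' (j+1) (2*k+1)
    have hv0 := avg_mid hw1' j k
    have hu0 := avg_mid hw1 j k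
    have hL1 := Lfun_nonneg hlam n (j+1, 2*k)
    have hL2 := Lfun_nonneg hlam n (j+1, 2*k+1)
    have ih1 := ih (j+1) (2*k)
    have ih2 := ih (j+1) (2*k+1)
    have hLrec : Lfun lam (n+1) (j,k)
        = lam (j,k) + Lfun lam n (j+1, 2*k) + Lfun lam n (j+1, 2*k+1) := rfl
    have hSrec : Sfun w lam (n+1) (j,k)
        = lam (j,k) / iAvg (dyadInt j k) (fun x => (w x)⁻¹)
          + Sfun w lam n (j+1, 2*k) + Sfun w lam n (j+1, 2*k+1) := rfl
    set m : ℝ := (2:ℝ)^(-(j+1)) with hmdef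
    set L1 : ℝ := Lfun lam n (j+1, 2*k) with hL1def
    set L2 : ℝ := Lfun lam n (j+1, 2*k+1) with hL2def
    set v1 : ℝ := iAvg (dyadInt (j+1) (2*k)) (fun x => (w x)⁻¹) with hv1def
    set v2 : ℝ := iAvg (dyadInt (j+1) (2*k+1)) (fun x => (w x)⁻¹) with hv2def
    set u1 : ℝ := iAvg (dyadInt (j+1) (2*k)) w with hu1def
    set u2 : ℝ := iAvg (dyadInt (j+1) (2*k+1)) w with hu2def
    set l0 : ℝ := lam (j,k) with hl0def
    -- the Carleson constraint
    have hId : l0/(2*m) + (L1/m + L2/m)/2 = (l0 + L1 + L2)/(2*m) := by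
      field_simp
      ring
    have hsum : l0/(2*m) + (L1/m + L2/m)/2 ≤ A := by
      have hLle := Lfun_le hlam hA hCarleson (n+1) j k
      rw [hLrec, hmj] at hLle
      rw [hId, div_le_iff₀ (by positivity)]
      linarith
    have MI := bellman_MI hA hv1 hv2 (div_nonneg hL1 hm.le) (div_nonneg hL2 hm.le)
      (div_nonneg (hlam (j,k)) (by positivity)) hsum
    -- rewrite the goal
    rw [hSrec, hLrec, hmj, hv0, hu0, ← hId]
    set Φ : ℝ := 1/(((v1+v2)/2)*(1+(l0/(2*m)+(L1/m+L2/m)/2)/A)) with hΦdef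
    set G : ℝ := (l0/(2*m))/(4*A*((v1+v2)/2)) with hGdef
    set φ1 : ℝ := 1/(v1*(1+(L1/m)/A)) with hφ1def
    set φ2 : ℝ := 1/(v2*(1+(L2/m)/A)) with hφ2def
    have hG : 4*A*(2*m)*G = l0/((v1+v2)/2) := by
      rw [hGdef]
      field_simp
    have hMI' := mul_le_mul_of_nonneg_left MI (by positivity : (0:ℝ) ≤ 4*A*(2*m))
    have hring1 : 4*A*m*(u1 - φ1) + 4*A*m*(u2 - φ2)
        = 4*A*(2*m)*((u1+u2)/2) - 4*A*(2*m)*((φ1+φ2)/2) := by ring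
    have hring2 : 4*A*(2*m)*(Φ+G) = 4*A*(2*m)*Φ + 4*A*(2*m)*G := by ring
    have hring3 : 4*A*(2*m)*((u1+u2)/2 - Φ)
        = 4*A*(2*m)*((u1+u2)/2) - 4*A*(2*m)*Φ := by ring
    linarith

/-! ### Finite subsets of the subtree -/

lemma FS (hw1' : LocallyIntegrable (fun x => (w x)⁻¹) volume)
    (hw2' : ∀ᵐ x : ℝ, 0 < (w x)⁻¹) (hlam : ∀ p, 0 ≤ lam p) :
    ∀ (n : ℕ) (j k : ℤ) (F : Finset (ℤ × ℤ)),
      (∀ p ∈ F, dyadInt p.1 p.2 ⊆ dyadInt j k ∧ p.1 < j + (n : ℤ)) →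
      ∑ p ∈ F, lam p / iAvg (dyadInt p.1 p.2) (fun x => (w x)⁻¹) ≤ Sfun w lam n (j,k) := by
  classical
  have hterm : ∀ p : ℤ × ℤ, 0 ≤ lam p / iAvg (dyadInt p.1 p.2) (fun x => (w x)⁻¹) :=
    fun p => div_nonneg (hlam p) (avg_pos hw1' hw2' p.1 p.2).le
  intro n
  induction n with
  | zero =>
    intro j k F hF
    have hFe : F = ∅ := by
      apply Finset.eq_empty_of_forall_notMem
      intro p hp
      obtain ⟨hs, hlt⟩ := hF p hp
      have := dyad_level hs
      simp at hlt
      omega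
    rw [hFe]
    simp [Sfun]
  | succ n ih =>
    intro j k F hF
    set G1 : Finset (ℤ × ℤ) := F.filter (fun p => p = (j,k)) with hG1def
    set G2 : Finset (ℤ × ℤ) :=
      F.filter (fun p => dyadInt p.1 p.2 ⊆ dyadInt (j+1) (2*k)) with hG2def
    set G3 : Finset (ℤ × ℤ) :=
      F.filter (fun p => dyadInt p.1 p.2 ⊆ dyadInt (j+1) (2*k+1)
        ∧ ¬ dyadInt p.1 p.2 ⊆ dyadInt (j+1) (2*k)) with hG3def
    have hd12 : Disjoint G1 G2 := by
      rw [Finset.disjoint_left]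
      intro p hp1 hp2
      rw [hG1def, Finset.mem_filter] at hp1
      rw [hG2def, Finset.mem_filter] at hp2
      rw [hp1.2] at hp2
      exact parent_ne_childL hp2.2
    have hd13 : Disjoint (G1 ∪ G2) G3 := by
      rw [Finset.disjoint_left]
      intro p hp1 hp3
      rw [hG3def, Finset.mem_filter] at hp3
      rcases Finset.mem_union.1 hp1 with h | h
      · rw [hG1def, Finset.mem_filter] at h
        rw [h.2] at hp3
        exact parent_ne_childR hp3.2.1
      · rw [hG2def, Finset.mem_filter] at h
        exact hp3.2.2 h.2
    have hFsplit : F = G1 ∪ G2 ∪ G3 := by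
      ext p
      constructor
      · intro hp
        obtain ⟨hs, _⟩ := hF p hp
        rcases dyad_trichotomy hs with ⟨h1, h2⟩ | h | h
        · apply Finset.mem_union_left
          apply Finset.mem_union_left
          rw [hG1def, Finset.mem_filter]
          refine ⟨hp, ?_⟩
          rw [show p = (p.1, p.2) from rfl, h1, h2]
        · apply Finset.mem_union_left
          apply Finset.mem_union_right
          rw [hG2def, Finset.mem_filter]
          exact ⟨hp, h⟩
        · by_cases h' : dyadInt p.1 p.2 ⊆ dyadInt (j+1) (2*k)
          · apply Finset.mem_union_left
            apply Finset.mem_union_right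
            rw [hG2def, Finset.mem_filter]
            exact ⟨hp, h'⟩
          · apply Finset.mem_union_right
            rw [hG3def, Finset.mem_filter]
            exact ⟨hp, h, h'⟩
      · intro hp
        rcases Finset.mem_union.1 hp with h | h
        · rcases Finset.mem_union.1 h with h' | h'
          · exact Finset.mem_of_mem_filter p h'
          · exact Finset.mem_of_mem_filter p h'
        · exact Finset.mem_of_mem_filter p h
    have hb1 : ∑ p ∈ G1, lam p / iAvg (dyadInt p.1 p.2) (fun x => (w x)⁻¹)
        ≤ lam (j,k) / iAvg (dyadInt j k) (fun x => (w x)⁻¹) := by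
      have hsub : G1 ⊆ {((j,k) : ℤ × ℤ)} := by
        intro p hp
        rw [hG1def, Finset.mem_filter] at hp
        rw [Finset.mem_singleton]
        exact hp.2
      calc ∑ p ∈ G1, lam p / iAvg (dyadInt p.1 p.2) (fun x => (w x)⁻¹)
          ≤ ∑ p ∈ {((j,k) : ℤ × ℤ)}, lam p / iAvg (dyadInt p.1 p.2) (fun x => (w x)⁻¹) :=
            Finset.sum_le_sum_of_subset_of_nonneg hsub (fun i _ _ => hterm i)
        _ = lam (j,k) / iAvg (dyadInt j k) (fun x => (w x)⁻¹) := Finset.sum_singleton _ _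
    have hb2 : ∑ p ∈ G2, lam p / iAvg (dyadInt p.1 p.2) (fun x => (w x)⁻¹)
        ≤ Sfun w lam n (j+1, 2*k) := by
      apply ih (j+1) (2*k)
      intro p hp
      rw [hG2def, Finset.mem_filter] at hp
      refine ⟨hp.2, ?_⟩
      have := (hF p hp.1).2
      push_cast at this ⊢
      omega
    have hb3 : ∑ p ∈ G3, lam p / iAvg (dyadInt p.1 p.2) (fun x => (w x)⁻¹)
        ≤ Sfun w lam n (j+1, 2*k+1) := by
      apply ih (j+1) (2*k+1)
      intro p hp
      rw [hG3def, Finset.mem_filter] at hp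
      refine ⟨hp.2.1, ?_⟩
      have := (hF p hp.1).2
      push_cast at this ⊢
      omega
    have hSrec : Sfun w lam (n+1) (j,k)
        = lam (j,k) / iAvg (dyadInt j k) (fun x => (w x)⁻¹)
          + Sfun w lam n (j+1, 2*k) + Sfun w lam n (j+1, 2*k+1) := rfl
    rw [hFsplit, Finset.sum_union hd13, Finset.sum_union hd12, hSrec]
    linarith

end BLL

open BLL in
/-- **Beznosova's Little Lemma.** -/
theorem beznosova_little_lemma (w : ℝ → ℝ) (hw : IsWeight1 w)
    (hw' : IsWeight1 (fun x => (w x)⁻¹))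
    (lam : ℤ × ℤ → ℝ) (hlam : ∀ p, 0 ≤ lam p) (A : ℝ) (hA : 0 < A)
    (hCarleson : ∀ j k : ℤ,
      ∑' q : {p : ℤ × ℤ // dyadInt p.1 p.2 ⊆ dyadInt j k}, ENNReal.ofReal (lam q.1)
        ≤ ENNReal.ofReal (A * (volume (dyadInt j k)).toReal)) :
    ∀ j k : ℤ,
      ∑' q : {p : ℤ × ℤ // dyadInt p.1 p.2 ⊆ dyadInt j k},
          ENNReal.ofReal (lam q.1 / iAvg (dyadInt q.1.1 q.1.2) (fun x => (w x)⁻¹))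
        ≤ ENNReal.ofReal (4 * A * ∫ x in dyadInt j k, w x) := by
  classical
  obtain ⟨hw1, hw2⟩ := hw
  obtain ⟨hw1', _⟩ := hw'
  have hw2' : ∀ᵐ x : ℝ, 0 < (w x)⁻¹ := hw2.mono fun x hx => inv_pos.2 hx
  intro j k
  rw [ENNReal.tsum_eq_iSup_sum]
  apply iSup_le
  intro F
  set F' : Finset (ℤ × ℤ) := F.image (fun q => q.1) with hF'def
  have himg : ∑ q ∈ F, ENNReal.ofReal (lam q.1 / iAvg (dyadInt q.1.1 q.1.2) (fun x => (w x)⁻¹))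
      = ∑ p ∈ F', ENNReal.ofReal (lam p / iAvg (dyadInt p.1 p.2) (fun x => (w x)⁻¹)) := by
    rw [hF'def]
    rw [Finset.sum_image (fun x _ y _ hxy => Subtype.ext hxy)]
  have hsub : ∀ p ∈ F', dyadInt p.1 p.2 ⊆ dyadInt j k := by
    intro p hp
    rw [hF'def, Finset.mem_image] at hp
    obtain ⟨q, _, rfl⟩ := hp
    exact q.2
  set n : ℕ := 1 + F'.sum (fun p => (p.1 - j).toNat) with hndef
  have hn : ∀ p ∈ F', p.1 < j + n := by
    intro p hp
    have hlev : j ≤ p.1 := dyad_level (hsub p hp)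
    have h1 : (p.1 - j).toNat ≤ F'.sum (fun p => (p.1 - j).toNat) :=
      Finset.single_le_sum (f := fun p : ℤ × ℤ => (p.1 - j).toNat) (fun q _ => Nat.zero_le _) hp
    have h2 : ((p.1 - j).toNat : ℤ) = p.1 - j := Int.toNat_of_nonneg (by omega)
    have h3 : ((p.1 - j).toNat : ℤ) ≤ (F'.sum (fun p => (p.1 - j).toNat) : ℤ) := by
      exact_mod_cast h1
    have h4 : (n : ℤ) = 1 + (F'.sum (fun p => (p.1 - j).toNat) : ℤ) := by
      rw [hndef]; push_cast; ring
    omega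
  have hreal : ∑ p ∈ F', lam p / iAvg (dyadInt p.1 p.2) (fun x => (w x)⁻¹)
      ≤ Sfun w lam n (j,k) :=
    FS hw1' hw2' hlam n j k F' (fun p hp => ⟨hsub p hp, hn p hp⟩)
  have hbell := bell hw1 hw2 hw1' hlam hA hCarleson n j k
  have hφ : 0 < 1/(iAvg (dyadInt j k) (fun x => (w x)⁻¹)
      * (1 + (Lfun lam n (j,k)/(2:ℝ)^(-j))/A)) := by
    have hv := avg_pos hw1' hw2' j k
    have hL := Lfun_nonneg hlam n (j,k)
    have hm := tzp (-j)
    positivity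
  have hub : Sfun w lam n (j,k) ≤ 4*A*(2:ℝ)^(-j) * iAvg (dyadInt j k) w := by
    have hmono : 4*A*(2:ℝ)^(-j) *
        (iAvg (dyadInt j k) w
          - 1/(iAvg (dyadInt j k) (fun x => (w x)⁻¹)
                * (1 + (Lfun lam n (j,k)/(2:ℝ)^(-j))/A)))
        ≤ 4*A*(2:ℝ)^(-j) * iAvg (dyadInt j k) w := by
      have hc : (0:ℝ) ≤ 4*A*(2:ℝ)^(-j) := by positivity
      nlinarith [hφ, hc]
    linarith
  have hint : 4*A*(2:ℝ)^(-j) * iAvg (dyadInt j k) w = 4 * A * ∫ x in dyadInt j k, w x := by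
    rw [show 4*A*(2:ℝ)^(-j) * iAvg (dyadInt j k) w
        = 4*A*(iAvg (dyadInt j k) w * (2:ℝ)^(-j)) by ring, avg_eq]
  rw [himg, ← ENNReal.ofReal_sum_of_nonneg
    (fun p _ => div_nonneg (hlam p) (avg_pos hw1' hw2' p.1 p.2).le)]
  apply ENNReal.ofReal_le_ofReal
  calc ∑ p ∈ F', lam p / iAvg (dyadInt p.1 p.2) (fun x => (w x)⁻¹)
      ≤ Sfun w lam n (j,k) := hreal
    _ ≤ 4*A*(2:ℝ)^(-j) * iAvg (dyadInt j k) w := hub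
    _ = 4 * A * ∫ x in dyadInt j k, w x := hint

end
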